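/- Let H be a complex Hilbert space and ι a countable index set. Let {f_i}_{i∈ι} and {g_i}_{i∈ι} be frames for H with Bessel bounds B_F and B_G, with frame operators S_F and S_G (both positive and invertible), and suppose ({f_i}, {g_i}) is a woven pair with uniform lower frame constant C > 0. If ‖S_F⁻¹ − S_G⁻¹‖² < C · max{ 1/(B_G B_F²), 1/(B_F B_G²) }, then the canonical dual frames {S_F⁻¹ f_i}_{i∈ι} and {S_G⁻¹ g_i}_{i∈ι} form a woven pair: there exist constants A', B' > 0 such that for every σ ⊆ ι and x ∈ H, A'‖x‖² ≤ ∑_{i∉σ}|⟪x, S_F⁻¹ f_i⟫|² + ∑_{i∈σ}|⟪x, S_G⁻¹ g_i⟫|² ≤ B'‖x‖². -/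

import Mathlib

local notation "⟪" x ", " y "⟫" => @inner ℂ _ _ x y

namespace WovenAux


lemma finset_cs {κ : Type*} (s : Finset κ) (a b : κ → ℝ) (ha : ∀ i, 0 ≤ a i)
    (hb : ∀ i, 0 ≤ b i) :
    ∑ i ∈ s, a i * b i ≤ Real.sqrt (∑ i ∈ s, a i ^ 2) * Real.sqrt (∑ i ∈ s, b i ^ 2) := by
  have h1 := Finset.sum_mul_sq_le_sq_mul_sq s a b
  have h2 : 0 ≤ ∑ i ∈ s, a i * b i := Finset.sum_nonneg fun i _ => mul_nonneg (ha i) (hb i)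
  rw [← Real.sqrt_mul (Finset.sum_nonneg fun i _ => sq_nonneg (a i))]
  rw [show ∑ i ∈ s, a i * b i = Real.sqrt ((∑ i ∈ s, a i * b i) ^ 2) by rw [Real.sqrt_sq h2]]
  exact Real.sqrt_le_sqrt h1

lemma tsum_cs {κ : Type*} (a b : κ → ℝ) (ha : ∀ i, 0 ≤ a i) (hb : ∀ i, 0 ≤ b i)
    (hsa : Summable fun i => a i ^ 2) (hsb : Summable fun i => b i ^ 2) :
    ∑' i, a i * b i ≤ Real.sqrt (∑' i, a i ^ 2) * Real.sqrt (∑' i, b i ^ 2) := by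
  apply tsum_le_of_sum_le' (mul_nonneg (Real.sqrt_nonneg _) (Real.sqrt_nonneg _))
  intro s
  refine (finset_cs s a b ha hb).trans ?_
  exact mul_le_mul (Real.sqrt_le_sqrt (Summable.sum_le_tsum s (fun i _ => sq_nonneg _) hsa))
    (Real.sqrt_le_sqrt (Summable.sum_le_tsum s (fun i _ => sq_nonneg _) hsb))
    (Real.sqrt_nonneg _) (Real.sqrt_nonneg _)

lemma tsum_sq_le_of_le {κ : Type*} (a b c : κ → ℝ) (A B : ℝ)
    (ha : ∀ i, 0 ≤ a i) (hb : ∀ i, 0 ≤ b i) (hc : ∀ i, 0 ≤ c i)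
    (hcab : ∀ i, c i ≤ a i + b i)
    (hsa : Summable fun i => a i ^ 2) (hsb : Summable fun i => b i ^ 2)
    (hA0 : 0 ≤ A) (hB0 : 0 ≤ B)
    (hA : ∑' i, a i ^ 2 ≤ A ^ 2) (hB : ∑' i, b i ^ 2 ≤ B ^ 2) :
    ∑' i, c i ^ 2 ≤ (A + B) ^ 2 := by
  apply tsum_le_of_sum_le' (sq_nonneg _)
  intro s
  have h1 : ∑ i ∈ s, c i ^ 2 ≤ ∑ i ∈ s, (a i ^ 2 + 2 * (a i * b i) + b i ^ 2) := by
    refine Finset.sum_le_sum fun i _ => ?_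
    nlinarith [hcab i, hc i, ha i, hb i]
  have h2 : ∑ i ∈ s, (a i ^ 2 + 2 * (a i * b i) + b i ^ 2)
      = ∑ i ∈ s, a i ^ 2 + 2 * ∑ i ∈ s, (a i * b i) + ∑ i ∈ s, b i ^ 2 := by
    simp [Finset.sum_add_distrib, Finset.mul_sum]
  have hsa' : ∑ i ∈ s, a i ^ 2 ≤ A ^ 2 := (Summable.sum_le_tsum s (fun i _ => sq_nonneg _) hsa).trans hA
  have hsb' : ∑ i ∈ s, b i ^ 2 ≤ B ^ 2 := (Summable.sum_le_tsum s (fun i _ => sq_nonneg _) hsb).trans hB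
  have hab : ∑ i ∈ s, a i * b i ≤ A * B := by
    refine (finset_cs s a b ha hb).trans ?_
    have h3 : Real.sqrt (∑ i ∈ s, a i ^ 2) ≤ A := by
      rw [show A = Real.sqrt (A ^ 2) by rw [Real.sqrt_sq hA0]]
      exact Real.sqrt_le_sqrt hsa'
    have h4 : Real.sqrt (∑ i ∈ s, b i ^ 2) ≤ B := by
      rw [show B = Real.sqrt (B ^ 2) by rw [Real.sqrt_sq hB0]]
      exact Real.sqrt_le_sqrt hsb'
    exact mul_le_mul h3 h4 (Real.sqrt_nonneg _) hA0
  nlinarith [h1, h2, hab, hsa', hsb']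

lemma summable_frame {H : Type*} [NormedAddCommGroup H] [InnerProductSpace ℂ H]
    {ι : Type*} (f : ι → H) (A : ℝ) (hA : 0 < A)
    (hlow : ∀ x : H, A * ‖x‖ ^ 2 ≤ ∑' i, ‖⟪x, f i⟫‖ ^ 2) (x : H) :
    Summable fun i => ‖⟪x, f i⟫‖ ^ 2 := by
  by_contra h
  have h0 := tsum_eq_zero_of_not_summable h
  have h1 := hlow x
  rw [h0] at h1
  have hx : x = 0 := by
    have h2 : ‖x‖ ^ 2 ≤ 0 := by
      by_contra hcon
      push_neg at hcon
      nlinarith [mul_pos hA hcon]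
    have h3 : ‖x‖ = 0 := pow_eq_zero_iff two_ne_zero |>.mp (le_antisymm h2 (sq_nonneg _))
    simpa using h3
  apply h
  subst hx
  simpa using summable_zero


lemma frame_op_bound {H : Type*} [NormedAddCommGroup H] [InnerProductSpace ℂ H] [CompleteSpace H]
    {ι : Type*} (g : ι → H) (B : ℝ) (hB : 0 < B)
    (S Sinv : H →L[ℂ] H)
    (hS : ∀ x : H, S x = ∑' i, ⟪g i, x⟫ • g i)
    (hinv : Sinv.comp S = 1)
    (hsum : ∀ x : H, Summable fun i => ‖⟪x, g i⟫‖ ^ 2)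
    (hub : ∀ x : H, ∑' i, ‖⟪x, g i⟫‖ ^ 2 ≤ B * ‖x‖ ^ 2)
    (x : H) : ‖S x‖ ≤ B * ‖x‖ := by
  have hid : ∀ y : H, Sinv (S y) = y := by
    intro y
    have h := congrArg (fun T : H →L[ℂ] H => T y) hinv
    simpa using h
  have hHasSum : HasSum (fun i => (⟪g i, x⟫ : ℂ) • g i) (S x) := by
    by_cases hs : Summable fun i => (⟪g i, x⟫ : ℂ) • g i
    · rw [hS]; exact hs.hasSum
    · exfalso
      have hx0 : S x = 0 := by rw [hS, tsum_eq_zero_of_not_summable hs]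
      have hx : x = 0 := by rw [← hid x, hx0, map_zero]
      exact hs (summable_zero.congr fun i => by simp [hx])
  have hsx : Summable fun i => ‖(⟪g i, x⟫ : ℂ)‖ ^ 2 :=
    (hsum x).congr fun i => by rw [norm_inner_symm]
  have hubx : ∑' i, ‖(⟪g i, x⟫ : ℂ)‖ ^ 2 ≤ B * ‖x‖ ^ 2 := by
    refine le_trans (le_of_eq (tsum_congr fun i => ?_)) (hub x)
    rw [norm_inner_symm]
  have key : ∀ y : H, ‖(⟪y, S x⟫ : ℂ)‖ ≤ B * ‖x‖ * ‖y‖ := by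
    intro y
    have h2 : HasSum (fun i => (⟪g i, x⟫ : ℂ) * ⟪y, g i⟫) ⟪y, S x⟫ := by
      have h3 := hHasSum.mapL (innerSL ℂ y)
      simpa [inner_smul_right] using h3
    have hsn : Summable fun i => ‖(⟪g i, x⟫ : ℂ)‖ * ‖(⟪y, g i⟫ : ℂ)‖ := by
      refine Summable.of_nonneg_of_le
        (fun i => mul_nonneg (norm_nonneg _) (norm_nonneg _))
        (fun i => ?_) (hsx.add (hsum y))
      nlinarith [sq_nonneg (‖(⟪g i, x⟫ : ℂ)‖ - ‖(⟪y, g i⟫ : ℂ)‖), norm_nonneg (⟪g i, x⟫ : ℂ),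
        norm_nonneg (⟪y, g i⟫ : ℂ)]
    have habs : ‖(⟪y, S x⟫ : ℂ)‖ ≤ ∑' i, ‖(⟪g i, x⟫ : ℂ)‖ * ‖(⟪y, g i⟫ : ℂ)‖ := by
      rw [← h2.tsum_eq]
      refine le_trans (norm_tsum_le_tsum_norm ?_) (le_of_eq (tsum_congr fun i => norm_mul _ _))
      exact hsn.congr fun i => (norm_mul _ _).symm
    refine habs.trans ?_
    refine le_trans (tsum_cs _ _ (fun i => norm_nonneg _) (fun i => norm_nonneg _) hsx (hsum y)) ?_
    have hs1 : Real.sqrt (∑' i, ‖(⟪g i, x⟫ : ℂ)‖ ^ 2) ≤ Real.sqrt B * ‖x‖ := by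
      rw [show Real.sqrt B * ‖x‖ = Real.sqrt (B * ‖x‖ ^ 2) by
        rw [Real.sqrt_mul hB.le, Real.sqrt_sq (norm_nonneg _)]]
      exact Real.sqrt_le_sqrt hubx
    have hs2 : Real.sqrt (∑' i, ‖(⟪y, g i⟫ : ℂ)‖ ^ 2) ≤ Real.sqrt B * ‖y‖ := by
      rw [show Real.sqrt B * ‖y‖ = Real.sqrt (B * ‖y‖ ^ 2) by
        rw [Real.sqrt_mul hB.le, Real.sqrt_sq (norm_nonneg _)]]
      exact Real.sqrt_le_sqrt (hub y)
    calc Real.sqrt (∑' i, ‖(⟪g i, x⟫ : ℂ)‖ ^ 2) * Real.sqrt (∑' i, ‖(⟪y, g i⟫ : ℂ)‖ ^ 2)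
        ≤ (Real.sqrt B * ‖x‖) * (Real.sqrt B * ‖y‖) := by
          exact mul_le_mul hs1 hs2 (Real.sqrt_nonneg _) (by positivity)
      _ = B * ‖x‖ * ‖y‖ := by
          rw [show (Real.sqrt B * ‖x‖) * (Real.sqrt B * ‖y‖)
            = (Real.sqrt B * Real.sqrt B) * (‖x‖ * ‖y‖) by ring, Real.mul_self_sqrt hB.le]
          ring
  have h5 := key (S x)
  have h6 : ‖(⟪S x, S x⟫ : ℂ)‖ = ‖S x‖ ^ 2 := by
    rw [inner_self_eq_norm_sq_to_K]
    simp [norm_pow]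
  rw [h6] at h5
  rcases eq_or_lt_of_le (norm_nonneg (S x)) with h7 | h7
  · rw [← h7]; positivity
  · nlinarith [h5, h7]


set_option maxHeartbeats 1000000 in
lemma core_lower {H : Type*} [NormedAddCommGroup H] [InnerProductSpace ℂ H]
    {ι : Type*} (f g : ι → H) (BF BG C d : ℝ)
    (hBF : 0 < BF) (hBG : 0 < BG) (hC : 0 < C) (hd0 : 0 ≤ d)
    (hsumF : ∀ x : H, Summable fun i => ‖⟪x, f i⟫‖ ^ 2)
    (hubF : ∀ x : H, ∑' i, ‖⟪x, f i⟫‖ ^ 2 ≤ BF * ‖x‖ ^ 2)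
    (hwoven : ∀ (σ : Set ι) (x : H),
      C * ‖x‖ ^ 2 ≤ (∑' i : {j : ι // j ∉ σ}, ‖⟪x, f (i : ι)⟫‖ ^ 2) +
        ∑' i : {j : ι // j ∈ σ}, ‖⟪x, g (i : ι)⟫‖ ^ 2)
    (U V : H → H)
    (hUV : ∀ x, ‖U x - V x‖ ≤ d * ‖x‖)
    (hV : ∀ x, ‖x‖ ≤ BG * ‖V x‖)
    (hd : BF * d ^ 2 < C / BG ^ 2) :
    ∃ A' : ℝ, 0 < A' ∧ ∀ (σ : Set ι) (x : H),
      A' * ‖x‖ ^ 2 ≤ (∑' i : {j : ι // j ∉ σ}, ‖⟪U x, f (i : ι)⟫‖ ^ 2) +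
        ∑' i : {j : ι // j ∈ σ}, ‖⟪V x, g (i : ι)⟫‖ ^ 2 := by
  set e : ℝ := C / BG ^ 2 - BF * d ^ 2 with he
  have he0 : 0 < e := by simp only [he]; linarith
  set t : ℝ := 2 * (BF * d ^ 2 + 1) / e with ht
  have hBFd : (0:ℝ) < BF * d ^ 2 + 1 := by positivity
  have ht0 : 0 < t := by rw [ht]; positivity
  set lam : ℝ := 1 + 1 / t with hlam
  have hlam' : lam = 1 + e / (2 * (BF * d ^ 2 + 1)) := by
    rw [hlam, ht, one_div_div]
  have hnum : e / 2 ≤ C / BG ^ 2 - lam * (BF * d ^ 2) := by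
    rw [hlam']
    have h1 : e / (2 * (BF * d ^ 2 + 1)) * (BF * d ^ 2) ≤ e / 2 := by
      rw [div_mul_eq_mul_div, div_le_div_iff₀ (by positivity) two_pos]
      nlinarith [he0.le, sq_nonneg d, hBF.le]
    nlinarith [h1]
  have hA'pos : 0 < (C / BG ^ 2 - lam * (BF * d ^ 2)) / (1 + t) :=
    div_pos (by linarith) (by linarith)
  refine ⟨(C / BG ^ 2 - lam * (BF * d ^ 2)) / (1 + t), hA'pos, ?_⟩
  intro σ x
  have hT1nn : (0:ℝ) ≤ ∑' i : {j : ι // j ∉ σ}, ‖⟪U x, f (i : ι)⟫‖ ^ 2 :=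
    tsum_nonneg fun i => sq_nonneg _
  have hT2nn : (0:ℝ) ≤ ∑' i : {j : ι // j ∈ σ}, ‖⟪V x, g (i : ι)⟫‖ ^ 2 :=
    tsum_nonneg fun i => sq_nonneg _
  have hw := hwoven σ (V x)
  -- bound perturbation
  have hsumsub : Summable fun i : {j : ι // j ∉ σ} => ‖⟪U x, f (i : ι)⟫‖ ^ 2 :=
    (hsumF (U x)).subtype {j : ι | j ∉ σ}
  have hsumsub2 : Summable fun i : {j : ι // j ∉ σ} => ‖⟪U x - V x, f (i : ι)⟫‖ ^ 2 :=
    (hsumF (U x - V x)).subtype {j : ι | j ∉ σ}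
  have hp : (∑' i : {j : ι // j ∉ σ}, ‖⟪V x, f (i : ι)⟫‖ ^ 2)
      ≤ (Real.sqrt (∑' i : {j : ι // j ∉ σ}, ‖⟪U x, f (i : ι)⟫‖ ^ 2)
          + Real.sqrt BF * (d * ‖x‖)) ^ 2 := by
    have hcab : ∀ i : {j : ι // j ∉ σ},
        ‖(⟪V x, f (i : ι)⟫ : ℂ)‖ ≤ ‖(⟪U x, f (i : ι)⟫ : ℂ)‖ + ‖(⟪U x - V x, f (i : ι)⟫ : ℂ)‖ := by
      intro i
      have hrw : (⟪V x, f (i : ι)⟫ : ℂ) = ⟪U x, f (i : ι)⟫ - ⟪U x - V x, f (i : ι)⟫ := by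
        rw [inner_sub_left]; ring
      rw [hrw]
      exact norm_sub_le _ _
    have hBineq : (∑' i : {j : ι // j ∉ σ}, ‖⟪U x - V x, f (i : ι)⟫‖ ^ 2)
        ≤ (Real.sqrt BF * (d * ‖x‖)) ^ 2 := by
      have hsub : (∑' i : {j : ι // j ∉ σ}, ‖⟪U x - V x, f (i : ι)⟫‖ ^ 2)
          ≤ ∑' i : ι, ‖⟪U x - V x, f i⟫‖ ^ 2 :=
        Summable.tsum_subtype_le (fun i : ι => ‖⟪U x - V x, f i⟫‖ ^ 2) {j : ι | j ∉ σ}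
          (fun i => sq_nonneg _) (hsumF (U x - V x))
      refine hsub.trans ((hubF (U x - V x)).trans ?_)
      have h8 : ‖U x - V x‖ ≤ d * ‖x‖ := hUV x
      have h9 : (Real.sqrt BF * (d * ‖x‖)) ^ 2 = BF * (d * ‖x‖) ^ 2 := by
        rw [mul_pow, Real.sq_sqrt hBF.le]
      rw [h9]
      have h10 : ‖U x - V x‖ ^ 2 ≤ (d * ‖x‖) ^ 2 :=
        pow_le_pow_left₀ (norm_nonneg _) h8 2
      nlinarith [hBF.le]
    exact tsum_sq_le_of_le (κ := {j : ι // j ∉ σ})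
      (fun i => ‖⟪U x, f (i : ι)⟫‖) (fun i => ‖⟪U x - V x, f (i : ι)⟫‖)
      (fun i => ‖⟪V x, f (i : ι)⟫‖)
      (Real.sqrt (∑' i : {j : ι // j ∉ σ}, ‖⟪U x, f (i : ι)⟫‖ ^ 2))
      (Real.sqrt BF * (d * ‖x‖))
      (fun i => norm_nonneg _) (fun i => norm_nonneg _) (fun i => norm_nonneg _)
      hcab hsumsub hsumsub2 (Real.sqrt_nonneg _) (by positivity)
      (le_of_eq (Real.sq_sqrt hT1nn).symm) hBineq
  -- Peter-Paul
  have hpp : (Real.sqrt (∑' i : {j : ι // j ∉ σ}, ‖⟪U x, f (i : ι)⟫‖ ^ 2)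
        + Real.sqrt BF * (d * ‖x‖)) ^ 2
      ≤ (1 + t) * (∑' i : {j : ι // j ∉ σ}, ‖⟪U x, f (i : ι)⟫‖ ^ 2)
        + lam * (BF * d ^ 2 * ‖x‖ ^ 2) := by
    set y : ℝ := Real.sqrt (∑' i : {j : ι // j ∉ σ}, ‖⟪U x, f (i : ι)⟫‖ ^ 2) with hy
    set z : ℝ := Real.sqrt BF * (d * ‖x‖) with hz
    have hy2 : y ^ 2 = ∑' i : {j : ι // j ∉ σ}, ‖⟪U x, f (i : ι)⟫‖ ^ 2 := Real.sq_sqrt hT1nn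
    have hz2 : z ^ 2 = BF * d ^ 2 * ‖x‖ ^ 2 := by
      rw [hz, mul_pow, mul_pow, Real.sq_sqrt hBF.le]; ring
    have key : (y + z) ^ 2 ≤ (1 + t) * y ^ 2 + lam * z ^ 2 := by
      rw [hlam, ← mul_le_mul_iff_right₀ ht0]
      have h10 : t * ((1 + t) * y ^ 2 + (1 + 1 / t) * z ^ 2)
          = t * (1 + t) * y ^ 2 + (t + 1) * z ^ 2 := by
        field_simp
      rw [h10]
      nlinarith [sq_nonneg (t * y - z), ht0]
    calc (y + z) ^ 2 ≤ (1 + t) * y ^ 2 + lam * z ^ 2 := key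
      _ = (1 + t) * (∑' i : {j : ι // j ∉ σ}, ‖⟪U x, f (i : ι)⟫‖ ^ 2)
          + lam * (BF * d ^ 2 * ‖x‖ ^ 2) := by rw [hy2, hz2]
  have hvx : ‖x‖ ^ 2 ≤ BG ^ 2 * ‖V x‖ ^ 2 := by
    nlinarith only [hV x, norm_nonneg x, norm_nonneg (V x), hBG]
  have h11 : C / BG ^ 2 * ‖x‖ ^ 2 ≤ C * ‖V x‖ ^ 2 := by
    rw [div_mul_eq_mul_div, div_le_iff₀ (by positivity)]
    nlinarith only [hvx, hC.le]
  have hcomb := hp.trans hpp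
  set T1 : ℝ := ∑' i : {j : ι // j ∉ σ}, ‖⟪U x, f (i : ι)⟫‖ ^ 2 with hT1
  set T2 : ℝ := ∑' i : {j : ι // j ∈ σ}, ‖⟪V x, g (i : ι)⟫‖ ^ 2 with hT2
  set P : ℝ := ∑' i : {j : ι // j ∉ σ}, ‖⟪V x, f (i : ι)⟫‖ ^ 2 with hP
  set n1 : ℝ := ‖x‖ ^ 2 with hn1
  set n2 : ℝ := ‖V x‖ ^ 2 with hn2
  rw [div_mul_eq_mul_div, div_le_iff₀ (show (0:ℝ) < 1 + t by linarith)]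
  have htT2 : 0 ≤ t * T2 := mul_nonneg ht0.le hT2nn
  clear_value e t lam T1 T2 P n1 n2
  nlinarith only [hw, hcomb, h11, htT2, hT1nn, hT2nn, ht0.le]


lemma tsum_not_compl {ι : Type*} (σ : Set ι) (F : ι → ℝ) :
    (∑' i : {j : ι // j ∉ σᶜ}, F (i : ι)) = ∑' i : {j : ι // j ∈ σ}, F (i : ι) :=
  ((Equiv.subtypeEquivRight (fun j => by simp : ∀ j, j ∈ σ ↔ j ∉ σᶜ)).tsum_eq
    (fun i : {j : ι // j ∉ σᶜ} => F (i : ι))).symm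

lemma tsum_mem_compl {ι : Type*} (σ : Set ι) (F : ι → ℝ) :
    (∑' i : {j : ι // j ∈ σᶜ}, F (i : ι)) = ∑' i : {j : ι // j ∉ σ}, F (i : ι) :=
  ((Equiv.subtypeEquivRight (fun j => by simp : ∀ j, j ∉ σ ↔ j ∈ σᶜ)).tsum_eq
    (fun i : {j : ι // j ∈ σᶜ} => F (i : ι))).symm

lemma upper_est {H : Type*} [NormedAddCommGroup H] [InnerProductSpace ℂ H] [CompleteSpace H]
    {ι : Type*} (f : ι → H) (B : ℝ) (hB : 0 ≤ B)
    (hsum : ∀ x : H, Summable fun i => ‖⟪x, f i⟫‖ ^ 2)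
    (hub : ∀ x : H, ∑' i, ‖⟪x, f i⟫‖ ^ 2 ≤ B * ‖x‖ ^ 2)
    (T : H →L[ℂ] H) (p : ι → Prop) (x : H) :
    (∑' i : {j : ι // p j}, ‖⟪x, T (f (i : ι))⟫‖ ^ 2) ≤ B * ‖T‖ ^ 2 * ‖x‖ ^ 2 := by
  have h1 : (∑' i : {j : ι // p j}, ‖⟪x, T (f (i : ι))⟫‖ ^ 2)
      = ∑' i : {j : ι // p j}, ‖⟪(ContinuousLinearMap.adjoint T) x, f (i : ι)⟫‖ ^ 2 :=
    tsum_congr fun i => by rw [ContinuousLinearMap.adjoint_inner_left]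
  rw [h1]
  have h2 : (∑' i : {j : ι // p j}, ‖⟪(ContinuousLinearMap.adjoint T) x, f (i : ι)⟫‖ ^ 2)
      ≤ ∑' i : ι, ‖⟪(ContinuousLinearMap.adjoint T) x, f i⟫‖ ^ 2 :=
    Summable.tsum_subtype_le (fun i : ι => ‖⟪(ContinuousLinearMap.adjoint T) x, f i⟫‖ ^ 2) {j : ι | p j}
      (fun i => sq_nonneg _) (hsum _)
  refine h2.trans ((hub _).trans ?_)
  have h3 : ‖(ContinuousLinearMap.adjoint T) x‖ ≤ ‖T‖ * ‖x‖ := by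
    refine ((ContinuousLinearMap.adjoint T).le_opNorm x).trans ?_
    have h4 : ‖ContinuousLinearMap.adjoint T‖ = ‖T‖ :=
      ContinuousLinearMap.adjoint.norm_map T
    rw [h4]
  have h5 : ‖(ContinuousLinearMap.adjoint T) x‖ ^ 2 ≤ (‖T‖ * ‖x‖) ^ 2 :=
    pow_le_pow_left₀ (norm_nonneg _) h3 2
  calc B * ‖(ContinuousLinearMap.adjoint T) x‖ ^ 2
      ≤ B * (‖T‖ * ‖x‖) ^ 2 := mul_le_mul_of_nonneg_left h5 hB
    _ = B * ‖T‖ ^ 2 * ‖x‖ ^ 2 := by ring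


end WovenAux

/-- **Woven pairs of canonical duals.**
Let `(f, g)` be a woven pair of frames for `H` with uniform lower frame constant `C > 0` and
Bessel bounds `BF`, `BG`, with invertible frame operators `SF`, `SG`.  If
`‖SF⁻¹ − SG⁻¹‖² < C · max{1/(BG·BF²), 1/(BF·BG²)}`, then the canonical dual frames
`(SF⁻¹ f, SG⁻¹ g)` form a woven pair. -/


theorem woven_of_canonical_duals
    {H : Type*} [NormedAddCommGroup H] [InnerProductSpace ℂ H] [CompleteSpace H]
    {ι : Type*} [Countable ι]
    (f g : ι → H) (AF BF AG BG C : ℝ)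
    (hAF : 0 < AF) (hBF : 0 < BF) (hAG : 0 < AG) (hBG : 0 < BG) (hC : 0 < C)
    (hframeF : ∀ x : H, AF * ‖x‖ ^ 2 ≤ (∑' i : ι, ‖⟪x, f i⟫‖ ^ 2) ∧
      (∑' i : ι, ‖⟪x, f i⟫‖ ^ 2) ≤ BF * ‖x‖ ^ 2)
    (hframeG : ∀ x : H, AG * ‖x‖ ^ 2 ≤ (∑' i : ι, ‖⟪x, g i⟫‖ ^ 2) ∧
      (∑' i : ι, ‖⟪x, g i⟫‖ ^ 2) ≤ BG * ‖x‖ ^ 2)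
    (hwoven : ∀ (σ : Set ι) (x : H),
      C * ‖x‖ ^ 2 ≤
        (∑' i : {j : ι // j ∉ σ}, ‖⟪x, f (i : ι)⟫‖ ^ 2) +
          ∑' i : {j : ι // j ∈ σ}, ‖⟪x, g (i : ι)⟫‖ ^ 2)
    (SF SG SFinv SGinv : H →L[ℂ] H)
    (hSF : ∀ x : H, SF x = ∑' i : ι, ⟪f i, x⟫ • f i)
    (hSG : ∀ x : H, SG x = ∑' i : ι, ⟪g i, x⟫ • g i)
    (hSFinv : SF.comp SFinv = 1 ∧ SFinv.comp SF = 1)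
    (hSGinv : SG.comp SGinv = 1 ∧ SGinv.comp SG = 1)
    (hpert : ‖SFinv - SGinv‖ ^ 2 < C * max (1 / (BG * BF ^ 2)) (1 / (BF * BG ^ 2))) :
    ∃ A' B' : ℝ, 0 < A' ∧ 0 < B' ∧
      ∀ (σ : Set ι) (x : H),
        A' * ‖x‖ ^ 2 ≤
            (∑' i : {j : ι // j ∉ σ}, ‖⟪x, SFinv (f (i : ι))⟫‖ ^ 2) +
              ∑' i : {j : ι // j ∈ σ}, ‖⟪x, SGinv (g (i : ι))⟫‖ ^ 2 ∧
          (∑' i : {j : ι // j ∉ σ}, ‖⟪x, SFinv (f (i : ι))⟫‖ ^ 2) +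
              (∑' i : {j : ι // j ∈ σ}, ‖⟪x, SGinv (g (i : ι))⟫‖ ^ 2) ≤ B' * ‖x‖ ^ 2 := by
  classical
  have hsumF : ∀ x : H, Summable fun i => ‖⟪x, f i⟫‖ ^ 2 :=
    WovenAux.summable_frame f AF hAF fun x => (hframeF x).1
  have hsumG : ∀ x : H, Summable fun i => ‖⟪x, g i⟫‖ ^ 2 :=
    WovenAux.summable_frame g AG hAG fun x => (hframeG x).1
  have hubF : ∀ x : H, ∑' i, ‖⟪x, f i⟫‖ ^ 2 ≤ BF * ‖x‖ ^ 2 := fun x => (hframeF x).2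
  have hubG : ∀ x : H, ∑' i, ‖⟪x, g i⟫‖ ^ 2 ≤ BG * ‖x‖ ^ 2 := fun x => (hframeG x).2
  set d : ℝ := ‖SFinv - SGinv‖ with hd
  have hd0 : 0 ≤ d := norm_nonneg _
  set U : H →L[ℂ] H := ContinuousLinearMap.adjoint SFinv with hU
  set V : H →L[ℂ] H := ContinuousLinearMap.adjoint SGinv with hV
  -- perturbation bound
  have hUV : ∀ x : H, ‖U x - V x‖ ≤ d * ‖x‖ := by
    intro x
    have h1 : U x - V x = (ContinuousLinearMap.adjoint (SFinv - SGinv)) x := by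
      rw [map_sub]; rfl
    rw [h1]
    refine ((ContinuousLinearMap.adjoint (SFinv - SGinv)).le_opNorm x).trans ?_
    rw [ContinuousLinearMap.adjoint.norm_map]
  -- operator norm bounds
  have hSFop : ∀ x : H, ‖SF x‖ ≤ BF * ‖x‖ :=
    WovenAux.frame_op_bound f BF hBF SF SFinv hSF hSFinv.2 hsumF hubF
  have hSGop : ∀ x : H, ‖SG x‖ ≤ BG * ‖x‖ :=
    WovenAux.frame_op_bound g BG hBG SG SGinv hSG hSGinv.2 hsumG hubG
  have hSFnorm : ‖SF‖ ≤ BF := ContinuousLinearMap.opNorm_le_bound SF hBF.le hSFop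
  have hSGnorm : ‖SG‖ ≤ BG := ContinuousLinearMap.opNorm_le_bound SG hBG.le hSGop
  -- lower bounds on adjoint-inverse images
  have hUlow : ∀ x : H, ‖x‖ ≤ BF * ‖U x‖ := by
    intro x
    have hcomp : (ContinuousLinearMap.adjoint SF).comp U = 1 := by
      rw [hU, ← ContinuousLinearMap.adjoint_comp SFinv SF, hSFinv.2,
        ContinuousLinearMap.one_def, ContinuousLinearMap.adjoint_id]
    have hx : (ContinuousLinearMap.adjoint SF) (U x) = x := by
      have h := congrArg (fun T : H →L[ℂ] H => T x) hcomp
      simpa using h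
    calc ‖x‖ = ‖(ContinuousLinearMap.adjoint SF) (U x)‖ := by rw [hx]
      _ ≤ ‖ContinuousLinearMap.adjoint SF‖ * ‖U x‖ :=
          (ContinuousLinearMap.adjoint SF).le_opNorm (U x)
      _ ≤ BF * ‖U x‖ := by
          have h4 : ‖ContinuousLinearMap.adjoint SF‖ = ‖SF‖ :=
            ContinuousLinearMap.adjoint.norm_map SF
          rw [h4]
          exact mul_le_mul_of_nonneg_right hSFnorm (norm_nonneg _)
  have hVlow : ∀ x : H, ‖x‖ ≤ BG * ‖V x‖ := by
    intro x
    have hcomp : (ContinuousLinearMap.adjoint SG).comp V = 1 := by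
      rw [hV, ← ContinuousLinearMap.adjoint_comp SGinv SG, hSGinv.2,
        ContinuousLinearMap.one_def, ContinuousLinearMap.adjoint_id]
    have hx : (ContinuousLinearMap.adjoint SG) (V x) = x := by
      have h := congrArg (fun T : H →L[ℂ] H => T x) hcomp
      simpa using h
    calc ‖x‖ = ‖(ContinuousLinearMap.adjoint SG) (V x)‖ := by rw [hx]
      _ ≤ ‖ContinuousLinearMap.adjoint SG‖ * ‖V x‖ :=
          (ContinuousLinearMap.adjoint SG).le_opNorm (V x)
      _ ≤ BG * ‖V x‖ := by
          have h4 : ‖ContinuousLinearMap.adjoint SG‖ = ‖SG‖ :=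
            ContinuousLinearMap.adjoint.norm_map SG
          rw [h4]
          exact mul_le_mul_of_nonneg_right hSGnorm (norm_nonneg _)
  -- rewriting the dual-frame coefficients via adjoints
  have hrwF : ∀ (p : ι → Prop) (x : H),
      (∑' i : {j : ι // p j}, ‖⟪x, SFinv (f (i : ι))⟫‖ ^ 2)
        = ∑' i : {j : ι // p j}, ‖⟪U x, f (i : ι)⟫‖ ^ 2 :=
    fun p x => tsum_congr fun i => by rw [hU, ContinuousLinearMap.adjoint_inner_left]
  have hrwG : ∀ (p : ι → Prop) (x : H),
      (∑' i : {j : ι // p j}, ‖⟪x, SGinv (g (i : ι))⟫‖ ^ 2)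
        = ∑' i : {j : ι // p j}, ‖⟪V x, g (i : ι)⟫‖ ^ 2 :=
    fun p x => tsum_congr fun i => by rw [hV, ContinuousLinearMap.adjoint_inner_left]
  -- swapped woven property
  have hwoven' : ∀ (σ : Set ι) (x : H),
      C * ‖x‖ ^ 2 ≤ (∑' i : {j : ι // j ∉ σ}, ‖⟪x, g (i : ι)⟫‖ ^ 2) +
        ∑' i : {j : ι // j ∈ σ}, ‖⟪x, f (i : ι)⟫‖ ^ 2 := by
    intro σ x
    have h := hwoven σᶜ x
    rw [WovenAux.tsum_not_compl σ (fun i => ‖⟪x, f i⟫‖ ^ 2),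
      WovenAux.tsum_mem_compl σ (fun i => ‖⟪x, g i⟫‖ ^ 2)] at h
    linarith
  -- lower frame bound for the duals
  have hlower : ∃ A' : ℝ, 0 < A' ∧ ∀ (σ : Set ι) (x : H),
      A' * ‖x‖ ^ 2 ≤
        (∑' i : {j : ι // j ∉ σ}, ‖⟪x, SFinv (f (i : ι))⟫‖ ^ 2) +
          ∑' i : {j : ι // j ∈ σ}, ‖⟪x, SGinv (g (i : ι))⟫‖ ^ 2 := by
    rcases max_choice (1 / (BG * BF ^ 2)) (1 / (BF * BG ^ 2)) with hmx | hmx <;>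
      rw [hmx] at hpert
    · -- case ‖D‖² < C / (BG·BF²)
      have hdlt : BG * d ^ 2 < C / BF ^ 2 := by
        rw [mul_one_div, lt_div_iff₀ (by positivity)] at hpert
        rw [lt_div_iff₀ (by positivity)]
        nlinarith only [hpert]
      obtain ⟨A', hA'pos, hA'⟩ :=
        WovenAux.core_lower g f BG BF C d hBG hBF hC hd0 hsumG hubG hwoven'
          (fun x => V x) (fun x => U x)
          (fun x => by
            have h := hUV x
            rw [show V x - U x = -(U x - V x) from (neg_sub _ _).symm, norm_neg]
            exact h)
          hUlow hdlt
      refine ⟨A', hA'pos, fun σ x => ?_⟩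
      have h := hA' σᶜ x
      rw [WovenAux.tsum_not_compl σ (fun i => ‖⟪V x, g i⟫‖ ^ 2),
        WovenAux.tsum_mem_compl σ (fun i => ‖⟪U x, f i⟫‖ ^ 2)] at h
      rw [hrwF (fun j => j ∉ σ) x, hrwG (fun j => j ∈ σ) x]
      linarith
    · -- case ‖D‖² < C / (BF·BG²)
      have hdlt : BF * d ^ 2 < C / BG ^ 2 := by
        rw [mul_one_div, lt_div_iff₀ (by positivity)] at hpert
        rw [lt_div_iff₀ (by positivity)]
        nlinarith only [hpert]
      obtain ⟨A', hA'pos, hA'⟩ :=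
        WovenAux.core_lower f g BF BG C d hBF hBG hC hd0 hsumF hubF hwoven
          (fun x => U x) (fun x => V x) hUV hVlow hdlt
      refine ⟨A', hA'pos, fun σ x => ?_⟩
      have h := hA' σ x
      rw [hrwF (fun j => j ∉ σ) x, hrwG (fun j => j ∈ σ) x]
      exact h
  obtain ⟨A', hA'pos, hA'⟩ := hlower
  refine ⟨A', BF * ‖SFinv‖ ^ 2 + BG * ‖SGinv‖ ^ 2 + 1, hA'pos, by positivity, fun σ x => ?_⟩
  refine ⟨hA' σ x, ?_⟩
  have hup1 := WovenAux.upper_est f BF hBF.le hsumF hubF SFinv (fun j => j ∉ σ) x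
  have hup2 := WovenAux.upper_est g BG hBG.le hsumG hubG SGinv (fun j => j ∈ σ) x
  nlinarith only [hup1, hup2, sq_nonneg ‖x‖]
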